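/- Let η(x) = (1 − |x|²/R²)^β for |x| < R and η(x) = 0 otherwise, where β ≥ 2 and R > 0. Then for x, y ∈ ℝ^d with |x| < R and R² − |x|² ≥ 4R|x−y|: (a) 2^{−β} ≤ η(y)/η(x) ≤ 2^β; (b) |η(x) − η(y)| ≤ β·2^β·R^{−1}·η(x)^{1−1/β}·|x−y|; (c) |η(x) − η(y) − ∇η(x)·(x−y)| ≤ β(β−1)·2^β·R^{−2}·η(x)^{1−2/β}·|x−y|², where ∇η(x) = −2βxR^{−2}η(x)^{1−1/β}. -/

import Mathlib

set_option maxHeartbeats 1000000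
open intervalIntegral MeasureTheory

lemma mvt_rpow (β M u v : ℝ) (hβ : 1 ≤ β) (hu : 0 ≤ u) (hv : 0 ≤ v)
    (huM : u ≤ M) (hvM : v ≤ M) : |v ^ β - u ^ β| ≤ β * M ^ (β - 1) * |v - u| := by
  have hβ0 : 0 < β := lt_of_lt_of_le one_pos hβ
  have hderiv : ∀ t ∈ Set.uIcc u v, HasDerivWithinAt (fun s : ℝ => s ^ β)
      (β * t ^ (β - 1)) (Set.uIcc u v) t := fun t _ => by
    simpa [mul_comm] using (Real.hasDerivAt_rpow_const (Or.inr hβ)).hasDerivWithinAt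
  have hbound : ∀ t ∈ Set.uIcc u v, ‖β * t ^ (β - 1)‖ ≤ β * M ^ (β - 1) := by
    intro t ht
    have ht0 : 0 ≤ t := le_trans (le_min hu hv) ht.1
    have htM : t ≤ M := le_trans ht.2 (max_le huM hvM)
    rw [Real.norm_eq_abs, abs_mul, abs_of_pos hβ0, abs_of_nonneg (Real.rpow_nonneg ht0 _)]
    exact mul_le_mul_of_nonneg_left (Real.rpow_le_rpow ht0 htM (by linarith)) hβ0.le
  have := (convex_uIcc u v).norm_image_sub_le_of_norm_hasDerivWithin_le hderiv hbound
    Set.left_mem_uIcc Set.right_mem_uIcc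
  simpa [Real.norm_eq_abs] using this

lemma taylor1 (f f' : ℝ → ℝ) (u v L : ℝ) (hL : 0 ≤ L)
    (hf : ∀ t ∈ Set.uIcc u v, HasDerivAt f (f' t) t)
    (hc : ContinuousOn f' (Set.uIcc u v))
    (hlip : ∀ t ∈ Set.uIcc u v, |f' t - f' u| ≤ L * |t - u|) :
    |f v - f u - f' u * (v - u)| ≤ L / 2 * (v - u) ^ 2 := by
  have hint : IntervalIntegrable f' volume u v := hc.intervalIntegrable
  have hftc : ∫ t in u..v, f' t = f v - f u :=
    integral_eq_sub_of_hasDerivAt hf hint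
  have hsub : f v - f u - f' u * (v - u) = ∫ t in u..v, (f' t - f' u) := by
    rw [intervalIntegral.integral_sub hint intervalIntegrable_const, hftc,
      intervalIntegral.integral_const, smul_eq_mul]
    ring
  have hbb : ∀ᵐ t ∂(volume.restrict (Set.uIoc u v)), ‖f' t - f' u‖ ≤ L * |t - u| := by
    refine ae_restrict_of_forall_mem measurableSet_uIoc fun t ht => ?_
    exact hlip t (Set.uIoc_subset_uIcc ht)
  have hgint : IntervalIntegrable (fun t => L * |t - u|) volume u v := by
    apply Continuous.intervalIntegrable; continuity
  have hmain := intervalIntegral.norm_integral_le_abs_of_norm_le hbb hgint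
  rw [Real.norm_eq_abs] at hmain
  rw [hsub]
  refine le_trans hmain ?_
  have habs : ∀ a b : ℝ, (∫ t in a..b, L * (t - u)) =
      L * ((b - u) ^ 2 / 2 - (a - u) ^ 2 / 2) := by
    intro a b
    rw [intervalIntegral.integral_const_mul, intervalIntegral.integral_comp_sub_right
      (fun t => t) u, integral_id]
    ring
  rcases le_total u v with h | h
  · have heq : (∫ t in u..v, L * |t - u|) = ∫ t in u..v, L * (t - u) := by
      refine intervalIntegral.integral_congr fun t ht => ?_
      rw [Set.uIcc_of_le h] at ht
      show L * |t - u| = L * (t - u)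
      rw [abs_of_nonneg (by linarith [ht.1] : (0:ℝ) ≤ t - u)]
    rw [heq, habs, abs_of_nonneg (by nlinarith [sq_nonneg (v - u)])]
    nlinarith [sq_nonneg (v - u)]
  · have heq : (∫ t in u..v, L * |t - u|) = ∫ t in u..v, -(L * (t - u)) := by
      refine intervalIntegral.integral_congr fun t ht => ?_
      rw [Set.uIcc_of_ge h] at ht
      show L * |t - u| = -(L * (t - u))
      rw [abs_of_nonpos (by linarith [ht.2] : t - u ≤ 0)]
      ring
    rw [heq, intervalIntegral.integral_neg, habs]
    rw [abs_neg, abs_of_nonneg (by nlinarith [sq_nonneg (v - u)])]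
    nlinarith [sq_nonneg (v - u)]

lemma taylor_rpow (β M u v : ℝ) (hβ : 2 ≤ β) (hu : 0 < u) (hv : 0 < v)
    (huM : u ≤ M) (hvM : v ≤ M) :
    |v ^ β - u ^ β - β * u ^ (β - 1) * (v - u)|
      ≤ β * (β - 1) * M ^ (β - 2) / 2 * (v - u) ^ 2 := by
  have hβ1 : (1 : ℝ) ≤ β - 1 := by linarith
  have hM : 0 < M := lt_of_lt_of_le hu huM
  have hL : 0 ≤ β * ((β - 1) * M ^ (β - 2)) := by positivity
  have h := taylor1 (fun t => t ^ β) (fun t => β * t ^ (β - 1)) u v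
    (β * ((β - 1) * M ^ (β - 2))) hL
    (fun t _ => by
      simpa [mul_comm] using Real.hasDerivAt_rpow_const (x := t) (p := β)
        (Or.inr (by linarith)))
    (fun t _ => by
      exact (continuousAt_const.mul
        (Real.continuousAt_rpow_const t (β - 1) (Or.inr (by linarith)))).continuousWithinAt)
    (fun t ht => by
      have ht0 : 0 ≤ t := le_trans (le_min hu.le hv.le) ht.1
      have htM : t ≤ M := le_trans ht.2 (max_le huM hvM)
      have := mvt_rpow (β - 1) M u t hβ1 hu.le ht0 huM htM
      calc |β * t ^ (β - 1) - β * u ^ (β - 1)| = β * |t ^ (β - 1) - u ^ (β - 1)| := by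
            rw [← mul_sub, abs_mul, abs_of_nonneg (by linarith : (0:ℝ) ≤ β)]
        _ ≤ β * ((β - 1) * M ^ ((β - 1) - 1) * |t - u|) :=
            mul_le_mul_of_nonneg_left this (by linarith)
        _ = β * ((β - 1) * M ^ (β - 2)) * |t - u| := by ring_nf)
  calc |v ^ β - u ^ β - β * u ^ (β - 1) * (v - u)| ≤
        β * ((β - 1) * M ^ (β - 2)) / 2 * (v - u) ^ 2 := h
    _ = β * (β - 1) * M ^ (β - 2) / 2 * (v - u) ^ 2 := by ring

theorem stmt17 (d : ℕ) (R β : ℝ) (hR : 0 < R) (hβ : 2 ≤ β)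
    (η : EuclideanSpace ℝ (Fin d) → ℝ)
    (hη : ∀ z, η z = if ‖z‖ < R then (1 - ‖z‖ ^ 2 / R ^ 2) ^ β else 0)
    (x y : EuclideanSpace ℝ (Fin d))
    (hx : ‖x‖ < R) (hxy : 4 * R * ‖x - y‖ ≤ R ^ 2 - ‖x‖ ^ 2) :
    ((2 : ℝ) ^ (-β) ≤ η y / η x ∧ η y / η x ≤ (2 : ℝ) ^ β) ∧
      |η x - η y| ≤ β * (2 : ℝ) ^ β * R⁻¹ * (η x) ^ (1 - 1 / β) * ‖x - y‖ ∧
      |η x - η y -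
          (inner ℝ (((-2) * β * (R ^ 2)⁻¹ * (η x) ^ (1 - 1 / β)) • x) (x - y) : ℝ)|
        ≤ β * (β - 1) * (2 : ℝ) ^ β * (R ^ 2)⁻¹ * (η x) ^ (1 - 2 / β) * ‖x - y‖ ^ 2 := by
  have hR2 : (0 : ℝ) < R ^ 2 := by positivity
  have hx0 : (0 : ℝ) ≤ ‖x‖ := norm_nonneg x
  have hy0 : (0 : ℝ) ≤ ‖y‖ := norm_nonneg y
  have hd0 : (0 : ℝ) ≤ ‖x - y‖ := norm_nonneg _
  set a := 1 - ‖x‖ ^ 2 / R ^ 2 with ha_def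
  set b := 1 - ‖y‖ ^ 2 / R ^ 2 with hb_def
  clear_value a b
  have hxR2 : ‖x‖ ^ 2 < R ^ 2 := by nlinarith
  have ha : 0 < a := by rw [ha_def, sub_pos, div_lt_one hR2]; exact hxR2
  have ha1 : a ≤ 1 := by
    rw [ha_def]
    have : 0 ≤ ‖x‖ ^ 2 / R ^ 2 := by positivity
    linarith
  have haR : a * R ^ 2 = R ^ 2 - ‖x‖ ^ 2 := by rw [ha_def]; field_simp
  have hdist : ‖x - y‖ ≤ R * a / 4 := by
    have h4 : 4 * ‖x - y‖ * R ≤ (R * a) * R := by linarith [haR, hxy]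
    have := le_of_mul_le_mul_right h4 hR
    linarith
  have hytri : ‖y‖ ≤ ‖x‖ + ‖x - y‖ := by
    calc ‖y‖ = ‖x - (x - y)‖ := by rw [sub_sub_cancel]
      _ ≤ ‖x‖ + ‖x - y‖ := norm_sub_le _ _
  have hyR : ‖y‖ < R := by
    have h3R : 0 < 3 * R - ‖x‖ := by linarith
    have hq : 0 < (R - ‖x‖) * (3 * R - ‖x‖) := mul_pos (sub_pos.mpr hx) h3R
    have h6 : (R * a / 4) * (4 * R) < (R - ‖x‖) * (4 * R) := by nlinarith [hq, haR]
    have h5 : R * a / 4 < R - ‖x‖ := lt_of_mul_lt_mul_right h6 (by positivity)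
    linarith [hytri, hdist, h5]
  have hnd : |‖x‖ - ‖y‖| ≤ ‖x - y‖ := abs_norm_sub_norm_le x y
  have habd : |b - a| ≤ 2 * ‖x - y‖ / R := by
    have h1 : b - a = (‖x‖ ^ 2 - ‖y‖ ^ 2) / R ^ 2 := by rw [ha_def, hb_def]; ring
    rw [h1, abs_div, abs_of_pos hR2, div_le_div_iff₀ hR2 hR]
    have h2 : |‖x‖ ^ 2 - ‖y‖ ^ 2| = |‖x‖ - ‖y‖| * (‖x‖ + ‖y‖) := by
      rw [← abs_of_nonneg (by positivity : (0:ℝ) ≤ ‖x‖ + ‖y‖), ← abs_mul]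
      congr 1; ring
    rw [h2]
    have h3 : ‖x‖ + ‖y‖ ≤ 2 * R := by linarith
    calc |‖x‖ - ‖y‖| * (‖x‖ + ‖y‖) * R ≤ (‖x - y‖ * (2 * R)) * R := by
          exact mul_le_mul_of_nonneg_right
            (mul_le_mul hnd h3 (by positivity) hd0) hR.le
      _ = 2 * ‖x - y‖ * R ^ 2 := by ring
  have habd2 : |b - a| ≤ a / 2 := by
    refine le_trans habd ?_
    rw [div_le_div_iff₀ hR (by norm_num : (0:ℝ) < 2)]
    linarith [hdist]
  obtain ⟨h1ab, h2ab⟩ := abs_le.mp habd2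
  have hb : 0 < b := by linarith
  have hb2a : b ≤ 2 * a := by linarith
  have ha2b : a ≤ 2 * b := by linarith
  have hηx : η x = a ^ β := by rw [hη x, if_pos hx, ha_def]
  have hηy : η y = b ^ β := by rw [hη y, if_pos hyR, hb_def]
  have haβ : (0:ℝ) < a ^ β := Real.rpow_pos_of_pos ha β
  have hbβ : (0:ℝ) < b ^ β := Real.rpow_pos_of_pos hb β
  have hβ0 : (0:ℝ) < β := by linarith
  have hβne : β ≠ 0 := ne_of_gt hβ0
  have h2β : (0:ℝ) < (2:ℝ) ^ β := Real.rpow_pos_of_pos two_pos β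
  have hexp1 : β * (1 - 1 / β) = β - 1 := by field_simp
  have hexp2 : β * (1 - 2 / β) = β - 2 := by field_simp
  have hpow1 : (η x) ^ (1 - 1 / β) = a ^ (β - 1) := by
    rw [hηx, ← Real.rpow_mul ha.le, hexp1]
  have hpow2 : (η x) ^ (1 - 2 / β) = a ^ (β - 2) := by
    rw [hηx, ← Real.rpow_mul ha.le, hexp2]
  have hap1 : (0:ℝ) ≤ a ^ (β - 1) := Real.rpow_nonneg ha.le _
  have hap2 : (0:ℝ) ≤ a ^ (β - 2) := Real.rpow_nonneg ha.le _
  refine ⟨⟨?_, ?_⟩, ?_, ?_⟩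
  · -- lower bound in (a)
    rw [hηx, hηy, Real.rpow_neg (by norm_num : (0:ℝ) ≤ 2), le_div_iff₀ haβ]
    have hup2 : a ^ β ≤ (2 * b) ^ β := Real.rpow_le_rpow ha.le ha2b hβ0.le
    rw [Real.mul_rpow (by norm_num) hb.le] at hup2
    have h7 := mul_le_mul_of_nonneg_left hup2 (inv_nonneg.mpr h2β.le)
    have h8 : ((2:ℝ) ^ β)⁻¹ * ((2:ℝ) ^ β * b ^ β) = b ^ β := by
      rw [← mul_assoc, inv_mul_cancel₀ h2β.ne', one_mul]
    calc ((2:ℝ) ^ β)⁻¹ * a ^ β ≤ ((2:ℝ) ^ β)⁻¹ * ((2:ℝ) ^ β * b ^ β) := h7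
      _ = b ^ β := h8
  · -- upper bound in (a)
    rw [hηx, hηy, div_le_iff₀ haβ]
    have hup : b ^ β ≤ (2 * a) ^ β := Real.rpow_le_rpow hb.le hb2a hβ0.le
    rw [Real.mul_rpow (by norm_num) ha.le] at hup
    calc b ^ β ≤ (2:ℝ) ^ β * a ^ β := hup
      _ = (2:ℝ) ^ β * a ^ β := rfl
  · -- part (b)
    rw [hpow1, hηx, hηy]
    have hmvt := mvt_rpow β (2 * a) a b (by linarith) ha.le hb.le (by linarith) hb2a
    have hC0 : 0 ≤ β * (2 * a) ^ (β - 1) :=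
      mul_nonneg hβ0.le (Real.rpow_nonneg (by linarith) _)
    have h2b1 : (2:ℝ) ^ (β - 1) = (2:ℝ) ^ β / 2 := by
      rw [Real.rpow_sub two_pos, Real.rpow_one]
    calc |a ^ β - b ^ β| = |b ^ β - a ^ β| := abs_sub_comm _ _
      _ ≤ β * (2 * a) ^ (β - 1) * |b - a| := hmvt
      _ ≤ β * (2 * a) ^ (β - 1) * (2 * ‖x - y‖ / R) := mul_le_mul_of_nonneg_left habd hC0
      _ = β * ((2:ℝ) ^ (β - 1) * a ^ (β - 1)) * (2 * ‖x - y‖ / R) := by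
          rw [Real.mul_rpow (by norm_num : (0:ℝ) ≤ 2) ha.le]
      _ = β * (2:ℝ) ^ β * R⁻¹ * a ^ (β - 1) * ‖x - y‖ := by
          rw [h2b1]; field_simp
  · -- part (c)
    have hinner : (inner ℝ (((-2) * β * (R ^ 2)⁻¹ * (η x) ^ (1 - 1 / β)) • x) (x - y) : ℝ)
        = ((-2) * β * (R ^ 2)⁻¹ * a ^ (β - 1)) * (inner ℝ x (x - y) : ℝ) := by
      rw [real_inner_smul_left, hpow1]
    set I : ℝ := inner ℝ x (x - y) with hI_def
    have h5 : ‖y‖ ^ 2 = ‖x‖ ^ 2 - 2 * I + ‖x - y‖ ^ 2 := by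
      have h := norm_sub_sq_real x (x - y)
      rw [sub_sub_cancel] at h
      linarith [h]
    have hI' : (b - a) * R ^ 2 = 2 * I - ‖x - y‖ ^ 2 := by
      have h6 : (b - a) * R ^ 2 = ‖x‖ ^ 2 - ‖y‖ ^ 2 := by
        rw [ha_def, hb_def]; field_simp; ring
      linarith [h5, h6]
    have hI2 : 2 * I * (R ^ 2)⁻¹ = (b - a) + ‖x - y‖ ^ 2 * (R ^ 2)⁻¹ := by
      field_simp
      linarith [hI']
    have hexpr : η x - η y - ((-2) * β * (R ^ 2)⁻¹ * a ^ (β - 1)) * I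
        = -(b ^ β - a ^ β - β * a ^ (β - 1) * (b - a))
          + β * a ^ (β - 1) * (‖x - y‖ ^ 2 * (R ^ 2)⁻¹) := by
      rw [hηx, hηy]
      linear_combination (β * a ^ (β - 1)) * hI2
    rw [hinner, hexpr, hpow2]
    have htay := taylor_rpow β (2 * a) a b hβ ha hb (by linarith) hb2a
    have h2am : (2 * a) ^ (β - 2) = (2:ℝ) ^ (β - 2) * a ^ (β - 2) :=
      Real.mul_rpow (by norm_num) ha.le
    have he1 : (1:ℝ) ≤ (2:ℝ) ^ (β - 2) := by
      calc (1:ℝ) = (2:ℝ) ^ (0:ℝ) := (Real.rpow_zero 2).symm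
        _ ≤ (2:ℝ) ^ (β - 2) := Real.rpow_le_rpow_of_exponent_le (by norm_num) (by linarith)
    have h4e : (2:ℝ) ^ β = 4 * (2:ℝ) ^ (β - 2) := by
      rw [show β = (β - 2) + 2 by ring, Real.rpow_add two_pos,
        show ((2:ℝ) ^ (2:ℝ)) = 4 by
          rw [show (2:ℝ) = ((2:ℕ):ℝ) by norm_num, Real.rpow_natCast]; norm_num]
      ring
    have hsq : (b - a) ^ 2 ≤ 4 * (‖x - y‖ ^ 2 * (R ^ 2)⁻¹) := by
      have := pow_le_pow_left₀ (abs_nonneg (b - a)) habd 2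
      rw [sq_abs] at this
      have hrw : (2 * ‖x - y‖ / R) ^ 2 = 4 * (‖x - y‖ ^ 2 * (R ^ 2)⁻¹) := by
        field_simp; ring
      calc (b - a) ^ 2 ≤ (2 * ‖x - y‖ / R) ^ 2 := this
        _ = 4 * (‖x - y‖ ^ 2 * (R ^ 2)⁻¹) := hrw
    have hF3 : a ^ (β - 1) ≤ a ^ (β - 2) :=
      Real.rpow_le_rpow_of_exponent_ge ha ha1 (by linarith)
    have hs0 : (0:ℝ) ≤ ‖x - y‖ ^ 2 * (R ^ 2)⁻¹ := mul_nonneg (sq_nonneg _) (inv_nonneg.mpr hR2.le)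
    set s : ℝ := ‖x - y‖ ^ 2 * (R ^ 2)⁻¹ with hs_def
    set q : ℝ := a ^ (β - 2) with hq_def
    set e : ℝ := (2:ℝ) ^ (β - 2) with he_def
    have hC1 : (0:ℝ) ≤ β * (β - 1) * (e * q) / 2 := by
      have h1 : (0:ℝ) ≤ e := le_trans zero_le_one he1
      have h2 : (0:ℝ) ≤ β - 1 := by linarith
      exact div_nonneg (mul_nonneg (mul_nonneg hβ0.le h2) (mul_nonneg h1 hap2)) (by norm_num)
    have hE2 : |b ^ β - a ^ β - β * a ^ (β - 1) * (b - a)|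
        ≤ β * (β - 1) * (e * q) / 2 * (4 * s) := by
      refine le_trans htay ?_
      rw [h2am]
      exact mul_le_mul_of_nonneg_left hsq hC1
    have hW0 : (0:ℝ) ≤ β * a ^ (β - 1) * s := by
      exact mul_nonneg (mul_nonneg hβ0.le hap1) hs0
    have hsplit : |-(b ^ β - a ^ β - β * a ^ (β - 1) * (b - a)) + β * a ^ (β - 1) * s|
        ≤ |b ^ β - a ^ β - β * a ^ (β - 1) * (b - a)| + β * a ^ (β - 1) * s := by
      refine le_trans (abs_add_le _ _) ?_
      rw [abs_neg, abs_of_nonneg hW0]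
    have hF3' : β * a ^ (β - 1) * s ≤ β * q * s :=
      mul_le_mul_of_nonneg_right (mul_le_mul_of_nonneg_left hF3 hβ0.le) hs0
    have hkey : (1:ℝ) ≤ 2 * (β - 1) * e := by
      have h1 : (1:ℝ) ≤ β - 1 := by linarith
      have h2 := mul_le_mul h1 he1 zero_le_one (by linarith : (0:ℝ) ≤ β - 1)
      rw [one_mul] at h2
      linarith
    have hfinal : β * (β - 1) * (e * q) / 2 * (4 * s) + β * q * s
        ≤ β * (β - 1) * (4 * e) * (R ^ 2)⁻¹ * q * ‖x - y‖ ^ 2 := by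
      have hqs : (0:ℝ) ≤ q * s := mul_nonneg hap2 hs0
      have h9 : β * (β - 1) * (4 * e) * (R ^ 2)⁻¹ * q * ‖x - y‖ ^ 2
          = 4 * β * (β - 1) * e * (q * s) := by rw [hs_def]; ring
      rw [h9]
      have hp : (0:ℝ) ≤ β * (q * s) * (2 * (β - 1) * e - 1) :=
        mul_nonneg (mul_nonneg hβ0.le hqs) (by linarith)
      linarith only [hp]
    calc |-(b ^ β - a ^ β - β * a ^ (β - 1) * (b - a)) + β * a ^ (β - 1) * s|
        ≤ β * (β - 1) * (e * q) / 2 * (4 * s) + β * q * s := by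
          refine le_trans hsplit (add_le_add hE2 hF3')
      _ ≤ β * (β - 1) * (4 * e) * (R ^ 2)⁻¹ * q * ‖x - y‖ ^ 2 := hfinal
      _ = β * (β - 1) * (2:ℝ) ^ β * (R ^ 2)⁻¹ * q * ‖x - y‖ ^ 2 := by rw [h4e]
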